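/- Let B : X → X be a bounded linear operator and let x ∈ ℓ^∞(X) be a bounded sequence satisfying x_{n+1} = B x_n + y_n for all n ≥ 0, where (y_n) is a sequence converging to 0 in X. Then S̄ x̄ = B̄ x̄ in Y, and the spectrum σ(x) of the sequence x is contained in σ(B) ∩ ∂D. -/

import Mathlib

set_option linter.unusedSectionVars false

open Filter Topology
open scoped ENNReal

noncomputable section

variable (X : Type*) [NormedAddCommGroup X] [NormedSpace ℂ X] [CompleteSpace X]

/-- `ℓ^∞(X)`: the Banach space of bounded sequences in `X` with the sup norm. -/
abbrev Linf : Type _ := ↥(lp (fun _ : ℕ => X) ∞)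

/-- `c₀(X)`: the subspace of `ℓ^∞(X)` of sequences converging to `0`. -/
def czero : Submodule ℂ (Linf X) where
  carrier := {f | Tendsto (fun n => f n) atTop (𝓝 (0 : X))}
  add_mem' := by
    intro f g hf hg
    simpa [lp.coeFn_add] using hf.add hg
  zero_mem' := by
    simp [lp.coeFn_zero]
  smul_mem' := by
    intro c f hf
    simpa [lp.coeFn_smul] using hf.const_smul c

instance : IsClosed ((czero X : Set (Linf X))) := by
  rw [← isSeqClosed_iff_isClosed]
  intro F f hF hFf
  show Tendsto (fun n => f n) atTop (𝓝 (0 : X))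
  rw [Metric.tendsto_atTop]
  intro ε hε
  obtain ⟨k, hk⟩ := (Metric.tendsto_atTop.mp hFf (ε / 2) (by linarith)).imp
    (fun k h => h k le_rfl)
  have hFk : Tendsto (fun n => (F k) n) atTop (𝓝 (0 : X)) := hF k
  obtain ⟨N, hN⟩ := Metric.tendsto_atTop.mp hFk (ε / 2) (by linarith)
  refine ⟨N, fun n hn => ?_⟩
  have h1 : ‖f n - (F k) n‖ ≤ ‖f - F k‖ := by
    have := lp.norm_apply_le_norm (ENNReal.top_ne_zero) (f - F k) n
    simpa [lp.coeFn_sub] using this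
  have h2 : ‖f - F k‖ < ε / 2 := by
    rw [← dist_eq_norm] at *
    rw [dist_comm]
    exact hk
  have h3 : ‖(F k) n‖ < ε / 2 := by simpa [dist_eq_norm] using hN n hn
  have : ‖f n‖ ≤ ‖f n - (F k) n‖ + ‖(F k) n‖ := by
    calc ‖f n‖ = ‖(f n - (F k) n) + (F k) n‖ := by rw [sub_add_cancel]
      _ ≤ ‖f n - (F k) n‖ + ‖(F k) n‖ := norm_add_le _ _
  · simp only [dist_eq_norm, sub_zero]
    calc ‖f n‖ ≤ ‖f n - (F k) n‖ + ‖(F k) n‖ := this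
      _ < ε / 2 + ε / 2 := by exact add_lt_add (lt_of_le_of_lt h1 h2) h3
      _ = ε := by ring

/-- The quotient space `Y = ℓ^∞(X)/c₀(X)`. -/
abbrev YY := (Linf X) ⧸ (czero X)

/-- The shift, as a map of bounded sequences. -/
def shiftFun (f : Linf X) : Linf X :=
  ⟨fun n => f (n + 1), memℓp_infty ⟨‖f‖, by
    rintro r ⟨n, rfl⟩
    exact lp.norm_apply_le_norm ENNReal.top_ne_zero f (n + 1)⟩⟩

@[simp] lemma shiftFun_apply (f : Linf X) (n : ℕ) : (shiftFun X f) n = f (n + 1) := rfl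

/-- The shift operator `S` on `ℓ^∞(X)`, `(Sx)ₙ = x_{n+1}`. -/
def shiftL : Linf X →L[ℂ] Linf X :=
  LinearMap.mkContinuous
    { toFun := shiftFun X
      map_add' := fun _ _ => rfl
      map_smul' := fun _ _ => rfl }
    1
    (fun f => by
      simp only [one_mul, LinearMap.coe_mk, AddHom.coe_mk]
      exact lp.norm_le_of_forall_le (norm_nonneg f)
        (fun n => lp.norm_apply_le_norm ENNReal.top_ne_zero f (n + 1)))

@[simp] lemma shiftL_apply (f : Linf X) (n : ℕ) : (shiftL X f) n = f (n + 1) := rfl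

lemma shift_mem_czero {f : Linf X} (hf : f ∈ czero X) : shiftL X f ∈ czero X := by
  have : Tendsto (fun n => f (n + 1)) atTop (𝓝 (0 : X)) :=
    hf.comp (tendsto_add_atTop_nat 1)
  show Tendsto (fun n => (shiftL X f) n) atTop (𝓝 (0 : X))
  simpa [czero, Set.mem_setOf_eq] using this

/-- The reduced shift operator `S̄` on `Y = ℓ^∞(X)/c₀(X)`, as a linear map. -/
def SbarLin : YY X →ₗ[ℂ] YY X :=
  Submodule.liftQ (czero X) ((czero X).mkQ.comp (shiftL X).toLinearMap)
    (by
      intro f hf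
      simp only [LinearMap.mem_ker, LinearMap.comp_apply, Submodule.mkQ_apply,
        ContinuousLinearMap.coe_coe, Submodule.Quotient.mk_eq_zero]
      exact shift_mem_czero X hf)

lemma SbarLin_mk (f : Linf X) :
    SbarLin X (Submodule.Quotient.mk f) = Submodule.Quotient.mk (shiftL X f) := rfl

/-- The reduced shift operator `S̄` on `Y = ℓ^∞(X)/c₀(X)`. -/
def Sbar : YY X →L[ℂ] YY X :=
  (SbarLin X).mkContinuous 1 (by
    intro y
    rw [one_mul]
    refine le_of_forall_pos_le_add (fun ε hε => ?_)
    obtain ⟨m, rfl, hm⟩ := Submodule.Quotient.norm_mk_lt y hε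
    rw [SbarLin_mk]
    calc ‖(Submodule.Quotient.mk (shiftL X m) : YY X)‖ ≤ ‖shiftL X m‖ :=
          Submodule.Quotient.norm_mk_le _ _
      _ ≤ ‖m‖ := lp.norm_le_of_forall_le (norm_nonneg m)
            (fun n => lp.norm_apply_le_norm ENNReal.top_ne_zero m (n + 1))
      _ ≤ ‖(Submodule.Quotient.mk m : YY X)‖ + ε := hm.le)

lemma Sbar_mk (f : Linf X) :
    Sbar X (Submodule.Quotient.mk f) = Submodule.Quotient.mk (shiftL X f) := rfl

/-- The function `g(λ) = R(λ, S̄) x̄ = (λ - S̄)⁻¹ x̄`. -/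
def gfun (x : Linf X) (z : ℂ) : YY X :=
  (resolvent (Sbar X) z) (Submodule.Quotient.mk x)

/-- The spectrum `σ(x)` of a bounded sequence `x`: the set of points `z₀ ∈ ℂ` such that the
holomorphic function `g(λ) = R(λ, S̄) x̄` (defined for `|λ| ≠ 1`) admits no holomorphic extension
to a neighborhood of `z₀`. -/
def seqSpectrum (x : Linf X) : Set ℂ :=
  {z₀ : ℂ | ¬ ∃ (U : Set ℂ) (h : ℂ → YY X), IsOpen U ∧ z₀ ∈ U ∧ AnalyticOnNhd ℂ h U ∧
      ∀ z ∈ U, ‖z‖ ≠ 1 → h z = gfun X x z}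

/-- The extension of an operator `B` on `X` to `ℓ^∞(X)`, acting coordinatewise. -/
def BextFun (B : X →L[ℂ] X) (f : Linf X) : Linf X :=
  ⟨fun n => B (f n), memℓp_infty ⟨‖B‖ * ‖f‖, by
    rintro r ⟨n, rfl⟩
    exact (B.le_opNorm _).trans
      (mul_le_mul_of_nonneg_left (lp.norm_apply_le_norm ENNReal.top_ne_zero f n)
        (norm_nonneg B))⟩⟩

@[simp] lemma BextFun_apply (B : X →L[ℂ] X) (f : Linf X) (n : ℕ) :
    (BextFun X B f) n = B (f n) := rfl

/-- The extension of `B` to `ℓ^∞(X)` as a bounded operator, `(Bx)ₙ = B xₙ`. -/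
def Bext (B : X →L[ℂ] X) : Linf X →L[ℂ] Linf X :=
  LinearMap.mkContinuous
    { toFun := BextFun X B
      map_add' := by
        intro f g
        apply Subtype.ext
        funext n
        show B ((f + g) n) = B (f n) + B (g n)
        have : (f + g) n = f n + g n := by rw [lp.coeFn_add]; rfl
        rw [this, map_add]
      map_smul' := by
        intro c f
        apply Subtype.ext
        funext n
        show B ((c • f) n) = c • B (f n)
        have : (c • f) n = c • f n := by rw [lp.coeFn_smul]; rfl
        rw [this, map_smul] }
    ‖B‖
    (fun f => by
      simp only [LinearMap.coe_mk, AddHom.coe_mk]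
      refine lp.norm_le_of_forall_le (mul_nonneg (norm_nonneg B) (norm_nonneg f)) fun n => ?_
      exact (B.le_opNorm _).trans
        (mul_le_mul_of_nonneg_left (lp.norm_apply_le_norm ENNReal.top_ne_zero f n)
          (norm_nonneg B)))

@[simp] lemma Bext_apply (B : X →L[ℂ] X) (f : Linf X) (n : ℕ) :
    (Bext X B f) n = B (f n) := rfl

lemma Bext_mem_czero (B : X →L[ℂ] X) {f : Linf X} (hf : f ∈ czero X) :
    Bext X B f ∈ czero X := by
  have hf' : Tendsto (fun n => f n) atTop (𝓝 (0 : X)) := hf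
  have : Tendsto (fun n => B (f n)) atTop (𝓝 (B (0 : X))) :=
    (B.continuous.tendsto 0).comp hf'
  show Tendsto (fun n => (Bext X B f) n) atTop (𝓝 (0 : X))
  simpa [czero, Set.mem_setOf_eq, map_zero] using this

/-- The operator induced by `B` on the quotient `Y = ℓ^∞(X)/c₀(X)`, as a linear map. -/
def BbarLin (B : X →L[ℂ] X) : YY X →ₗ[ℂ] YY X :=
  Submodule.liftQ (czero X) ((czero X).mkQ.comp (Bext X B).toLinearMap)
    (by
      intro f hf
      simp only [LinearMap.mem_ker, LinearMap.comp_apply, Submodule.mkQ_apply,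
        ContinuousLinearMap.coe_coe, Submodule.Quotient.mk_eq_zero]
      exact Bext_mem_czero X B hf)

lemma BbarLin_mk (B : X →L[ℂ] X) (f : Linf X) :
    BbarLin X B (Submodule.Quotient.mk f) = Submodule.Quotient.mk (Bext X B f) := rfl

/-- The operator induced by `B` on the quotient `Y = ℓ^∞(X)/c₀(X)`. -/
def Bbar (B : X →L[ℂ] X) : YY X →L[ℂ] YY X :=
  (BbarLin X B).mkContinuous ‖B‖ (by
    intro y
    refine le_of_forall_pos_le_add (fun ε hε => ?_)
    have hδ : 0 < ε / (‖B‖ + 1) := by positivity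
    obtain ⟨m, rfl, hm⟩ := Submodule.Quotient.norm_mk_lt y hδ
    rw [BbarLin_mk]
    have hB : (0:ℝ) ≤ ‖B‖ := norm_nonneg B
    have h0 : ‖Bext X B m‖ ≤ ‖B‖ * ‖m‖ :=
      lp.norm_le_of_forall_le (mul_nonneg hB (norm_nonneg m)) fun n =>
        (B.le_opNorm _).trans
          (mul_le_mul_of_nonneg_left (lp.norm_apply_le_norm ENNReal.top_ne_zero m n) hB)
    have h1 : ‖(Submodule.Quotient.mk (Bext X B m) : YY X)‖ ≤ ‖B‖ * ‖m‖ :=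
      (Submodule.Quotient.norm_mk_le _ _).trans h0
    have h2 : ‖B‖ * ‖m‖ ≤ ‖B‖ * (‖(Submodule.Quotient.mk m : YY X)‖ + ε / (‖B‖ + 1)) :=
      mul_le_mul_of_nonneg_left hm.le hB
    have hp : (0:ℝ) < ‖B‖ + 1 := by positivity
    have h3 : ‖B‖ * (ε / (‖B‖ + 1)) ≤ ε := by
      rw [mul_div_assoc', div_le_iff₀ hp]
      nlinarith
    have h4 : ‖B‖ * (‖(Submodule.Quotient.mk m : YY X)‖ + ε / (‖B‖ + 1))
        = ‖B‖ * ‖(Submodule.Quotient.mk m : YY X)‖ + ‖B‖ * (ε / (‖B‖ + 1)) := mul_add _ _ _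
    linarith)

lemma Bbar_mk (B : X →L[ℂ] X) (f : Linf X) :
    Bbar X B (Submodule.Quotient.mk f) = Submodule.Quotient.mk (Bext X B f) := rfl


/- ### Auxiliary lemmas -/
set_option maxHeartbeats 1000000


lemma lp_sub_apply (f g : Linf X) (n : ℕ) : (f - g) n = f n - g n := by
  rw [lp.coeFn_sub]; rfl

lemma lp_smul_apply (c : ℂ) (f : Linf X) (n : ℕ) : (c • f) n = c • f n := by
  rw [lp.coeFn_smul]; rfl

lemma lp_add_apply (f g : Linf X) (n : ℕ) : (f + g) n = f n + g n := by
  rw [lp.coeFn_add]; rfl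

/-- The right shift on bounded sequences: pads with a zero in front. -/
def rshiftFun (f : Linf X) : Linf X :=
  ⟨fun n => Nat.rec (0 : X) (fun m _ => f m) n, memℓp_infty ⟨‖f‖, by
    rintro r ⟨n, rfl⟩
    cases n with
    | zero => simpa using norm_nonneg f
    | succ m => exact lp.norm_apply_le_norm ENNReal.top_ne_zero f m⟩⟩

@[simp] lemma rshiftFun_apply_zero (f : Linf X) : (rshiftFun X f) 0 = 0 := rfl

@[simp] lemma rshiftFun_apply_succ (f : Linf X) (n : ℕ) :
    (rshiftFun X f) (n + 1) = f n := rfl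

/-- The right shift as a bounded operator on `ℓ^∞(X)`. -/
def rshiftL : Linf X →L[ℂ] Linf X :=
  LinearMap.mkContinuous
    { toFun := rshiftFun X
      map_add' := by
        intro f g
        apply Subtype.ext
        funext n
        show (rshiftFun X (f + g)) n = (rshiftFun X f) n + (rshiftFun X g) n
        cases n with
        | zero => simp
        | succ m => simp [lp_add_apply]
      map_smul' := by
        intro c f
        apply Subtype.ext
        funext n
        show (rshiftFun X (c • f)) n = c • (rshiftFun X f) n
        cases n with
        | zero => simp
        | succ m => simp [lp_smul_apply] }
    1
    (fun f => by
      simp only [one_mul, LinearMap.coe_mk, AddHom.coe_mk]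
      refine lp.norm_le_of_forall_le (norm_nonneg f) (fun n => ?_)
      cases n with
      | zero => simpa using norm_nonneg f
      | succ m => exact lp.norm_apply_le_norm ENNReal.top_ne_zero f m)

@[simp] lemma rshiftL_apply_zero (f : Linf X) : (rshiftL X f) 0 = 0 := rfl

@[simp] lemma rshiftL_apply_succ (f : Linf X) (n : ℕ) : (rshiftL X f) (n + 1) = f n := rfl

lemma rshift_mem_czero {f : Linf X} (hf : f ∈ czero X) : rshiftL X f ∈ czero X := by
  have h1 : Tendsto (fun n => f n) atTop (𝓝 (0 : X)) := hf
  have h2 : Tendsto (fun n : ℕ => f (n - 1)) atTop (𝓝 (0 : X)) :=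
    h1.comp (tendsto_sub_atTop_nat 1)
  show Tendsto (fun n => (rshiftL X f) n) atTop (𝓝 (0 : X))
  refine h2.congr' ?_
  filter_upwards [eventually_ge_atTop 1] with n hn
  obtain ⟨m, rfl⟩ := Nat.exists_eq_add_of_le hn
  simp [Nat.add_comm 1 m]

/-- The right shift induced on the quotient, as a linear map. -/
def TbarLin : YY X →ₗ[ℂ] YY X :=
  Submodule.liftQ (czero X) ((czero X).mkQ.comp (rshiftL X).toLinearMap)
    (by
      intro f hf
      simp only [LinearMap.mem_ker, LinearMap.comp_apply, Submodule.mkQ_apply,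
        ContinuousLinearMap.coe_coe, Submodule.Quotient.mk_eq_zero]
      exact rshift_mem_czero X hf)

lemma TbarLin_mk (f : Linf X) :
    TbarLin X (Submodule.Quotient.mk f) = Submodule.Quotient.mk (rshiftL X f) := rfl

/-- The right shift induced on the quotient. -/
def Tbar : YY X →L[ℂ] YY X :=
  (TbarLin X).mkContinuous 1 (by
    intro y
    rw [one_mul]
    refine le_of_forall_pos_le_add (fun ε hε => ?_)
    obtain ⟨m, rfl, hm⟩ := Submodule.Quotient.norm_mk_lt y hε
    rw [TbarLin_mk]
    calc ‖(Submodule.Quotient.mk (rshiftL X m) : YY X)‖ ≤ ‖rshiftL X m‖ :=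
          Submodule.Quotient.norm_mk_le _ _
      _ ≤ ‖m‖ := by
          refine lp.norm_le_of_forall_le (norm_nonneg m) (fun n => ?_)
          cases n with
          | zero => simpa using norm_nonneg m
          | succ k => exact lp.norm_apply_le_norm ENNReal.top_ne_zero m k
      _ ≤ ‖(Submodule.Quotient.mk m : YY X)‖ + ε := hm.le)

lemma Tbar_mk (f : Linf X) :
    Tbar X (Submodule.Quotient.mk f) = Submodule.Quotient.mk (rshiftL X f) := rfl

lemma Tbar_norm_le : ‖Tbar X‖ ≤ 1 :=
  LinearMap.mkContinuous_norm_le _ zero_le_one _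

lemma Sbar_norm_le : ‖Sbar X‖ ≤ 1 :=
  LinearMap.mkContinuous_norm_le _ zero_le_one _

lemma Sbar_mul_Tbar : Sbar X * Tbar X = 1 := by
  ext yv
  obtain ⟨f, rfl⟩ := Submodule.Quotient.mk_surjective (czero X) yv
  show Sbar X (Tbar X (Submodule.Quotient.mk f)) = Submodule.Quotient.mk f
  rw [Tbar_mk, Sbar_mk]
  congr 1

lemma Tbar_mul_Sbar : Tbar X * Sbar X = 1 := by
  ext yv
  obtain ⟨f, rfl⟩ := Submodule.Quotient.mk_surjective (czero X) yv
  show Tbar X (Sbar X (Submodule.Quotient.mk f)) = Submodule.Quotient.mk f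
  rw [Sbar_mk, Tbar_mk]
  rw [Submodule.Quotient.eq]
  show Tendsto (fun n => (rshiftL X (shiftL X f) - f) n) atTop (𝓝 (0 : X))
  have : ∀ n : ℕ, 1 ≤ n → (rshiftL X (shiftL X f) - f) n = 0 := by
    intro n hn
    cases n with
    | zero => omega
    | succ m =>
      rw [lp_sub_apply]
      show (rshiftL X (shiftL X f)) (m + 1) - f (m + 1) = 0
      simp
  refine tendsto_const_nhds.congr' ?_
  filter_upwards [eventually_ge_atTop 1] with n hn
  exact (this n hn).symm

lemma isUnit_Sbar : IsUnit (Sbar X) :=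
  ⟨⟨Sbar X, Tbar X, Sbar_mul_Tbar X, Tbar_mul_Sbar X⟩, rfl⟩

section Generic

variable {E : Type*} [NormedAddCommGroup E] [NormedSpace ℂ E] [CompleteSpace E]

lemma gen_mem_res_isUnit (C : E →L[ℂ] E) {z : ℂ}
    (h : IsUnit (algebraMap ℂ (E →L[ℂ] E) z - C)) : z ∈ resolventSet ℂ C :=
  spectrum.mem_resolventSet_iff.mpr h

lemma gen_mem_res_ne_one (S T : E →L[ℂ] E) (hTS : T * S = 1) (hST : S * T = 1)
    (hSn : ‖S‖ ≤ 1) (hTn : ‖T‖ ≤ 1) {z : ℂ} (hz : ‖z‖ ≠ 1) :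
    z ∈ resolventSet ℂ S := by
  rcases lt_or_gt_of_ne hz with h | h
  · rw [spectrum.mem_resolventSet_iff]
    set p := algebraMap ℂ (E →L[ℂ] E) z with hp
    have key : (p * T - 1) * S = p - S := by
      rw [sub_mul, mul_assoc, hTS, one_mul, mul_one]
    rw [← key]
    refine IsUnit.mul ?_ ⟨⟨S, T, hST, hTS⟩, rfl⟩
    have hnorm : ‖p * T‖ < 1 := by
      have h1 : ‖p * T‖ ≤ ‖p‖ * ‖T‖ := norm_mul_le _ _
      have h2 : ‖p‖ ≤ ‖z‖ := by
        rw [hp]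
        calc ‖algebraMap ℂ (E →L[ℂ] E) z‖ = ‖z‖ * ‖(1 : E →L[ℂ] E)‖ :=
              norm_algebraMap (E →L[ℂ] E) z
          _ ≤ ‖z‖ * 1 :=
              mul_le_mul_of_nonneg_left ContinuousLinearMap.norm_id_le (norm_nonneg z)
          _ = ‖z‖ := mul_one _
      have h3 : ‖p‖ * ‖T‖ ≤ ‖z‖ * 1 :=
        mul_le_mul h2 hTn (norm_nonneg T) (norm_nonneg z)
      calc ‖p * T‖ ≤ ‖z‖ * 1 := h1.trans h3
        _ = ‖z‖ := mul_one _
        _ < 1 := h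
    have hu := isUnit_one_sub_of_norm_lt_one hnorm
    rw [show p * T - 1 = -(1 - p * T) from (neg_sub 1 (p * T)).symm]
    exact hu.neg
  · refine spectrum.mem_resolventSet_of_norm_lt_mul ?_
    calc ‖S‖ * ‖(1 : E →L[ℂ] E)‖ ≤ 1 * 1 :=
          mul_le_mul hSn ContinuousLinearMap.norm_id_le
            (norm_nonneg (1 : E →L[ℂ] E)) zero_le_one
      _ = 1 := one_mul 1
      _ < ‖z‖ := h

lemma gen_resolvent_eq (S C : E →L[ℂ] E) (hc : Commute S C) (v : E) (hv : S v = C v)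
    {z : ℂ} (hS : z ∈ resolventSet ℂ S) (hC : z ∈ resolventSet ℂ C) :
    (resolvent S z) v = (resolvent C z) v := by
  rw [spectrum.mem_resolventSet_iff] at hS hC
  show (Ring.inverse (algebraMap ℂ (E →L[ℂ] E) z - S)) v
      = (Ring.inverse (algebraMap ℂ (E →L[ℂ] E) z - C)) v
  set a := algebraMap ℂ (E →L[ℂ] E) z - S with ha
  set b := algebraMap ℂ (E →L[ℂ] E) z - C with hb
  have hcomm : Commute a b := by
    have c1 : Commute (algebraMap ℂ (E →L[ℂ] E) z) C := Algebra.commutes z C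
    have cS : Commute S (algebraMap ℂ (E →L[ℂ] E) z) := (Algebra.commutes z S).symm
    have step1 : Commute (algebraMap ℂ (E →L[ℂ] E) z) b := (Commute.refl _).sub_right c1
    have step2 : Commute S b := cS.sub_right hc
    exact step1.sub_left step2
  have hab : a v = b v := by
    simp only [ha, hb, ContinuousLinearMap.sub_apply, hv]
  have hinv_comm : a * Ring.inverse b = Ring.inverse b * a := by
    obtain ⟨u, hu⟩ := hC
    have hcu : Commute a ↑u := by rw [hu]; exact hcomm
    rw [← hu, Ring.inverse_unit]
    exact (hcu.units_inv_right).eq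
  have key : a ((Ring.inverse b) v) = v := by
    have h1 : a ((Ring.inverse b) v) = (a * Ring.inverse b) v := rfl
    rw [h1, hinv_comm]
    show (Ring.inverse b) (a v) = v
    rw [hab]
    have h2 : (Ring.inverse b) (b v) = (Ring.inverse b * b) v := rfl
    rw [h2, Ring.inverse_mul_cancel b hC]
    rfl
  have h3 : (Ring.inverse a) (a ((Ring.inverse b) v)) = (Ring.inverse a) v :=
    congrArg _ key
  have h4 : (Ring.inverse a) (a ((Ring.inverse b) v))
      = (Ring.inverse a * a) ((Ring.inverse b) v) := rfl
  rw [h4, Ring.inverse_mul_cancel a hS] at h3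
  exact h3.symm

lemma gen_analyticOnNhd (S : E →L[ℂ] E) (v : E) (U : Set ℂ) (hU : IsOpen U)
    (hUres : U ⊆ resolventSet ℂ S) :
    AnalyticOnNhd ℂ (fun z => (resolvent S z) v) U := by
  refine DifferentiableOn.analyticOnNhd ?_ hU
  intro z hz
  have h1 : DifferentiableAt ℂ (fun w => resolvent S w) z :=
    (spectrum.hasDerivAt_resolvent (hUres hz)).differentiableAt
  exact (((ContinuousLinearMap.apply ℂ E v).differentiableAt).comp z h1).differentiableWithinAt

end Generic

/-- Every point off the unit circle is in the resolvent set of `S̄`. -/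
lemma mem_resolventSet_Sbar {z : ℂ} (hz : ‖z‖ ≠ 1) : z ∈ resolventSet ℂ (Sbar X) :=
  gen_mem_res_ne_one (Sbar X) (Tbar X) (Tbar_mul_Sbar X) (Sbar_mul_Tbar X)
    (Sbar_norm_le X) (Tbar_norm_le X) hz

lemma Bbar_mul (A C : X →L[ℂ] X) : Bbar X (A * C) = Bbar X A * Bbar X C := by
  ext yv
  obtain ⟨f, rfl⟩ := Submodule.Quotient.mk_surjective (czero X) yv
  show Bbar X (A * C) (Submodule.Quotient.mk f)
      = Bbar X A (Bbar X C (Submodule.Quotient.mk f))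
  rw [Bbar_mk, Bbar_mk, Bbar_mk]
  congr 1

lemma Bbar_one : Bbar X (1 : X →L[ℂ] X) = 1 := by
  ext yv
  obtain ⟨f, rfl⟩ := Submodule.Quotient.mk_surjective (czero X) yv
  show Bbar X 1 (Submodule.Quotient.mk f) = Submodule.Quotient.mk f
  rw [Bbar_mk]
  congr 1

lemma isUnit_Bbar {A : X →L[ℂ] X} (hA : IsUnit A) : IsUnit (Bbar X A) := by
  obtain ⟨u, rfl⟩ := hA
  refine ⟨⟨Bbar X u, Bbar X ↑u⁻¹, ?_, ?_⟩, rfl⟩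
  · rw [← Bbar_mul, u.mul_inv, Bbar_one]
  · rw [← Bbar_mul, u.inv_mul, Bbar_one]

lemma Bbar_algebraMap_sub (z : ℂ) (B : X →L[ℂ] X) :
    Bbar X (algebraMap ℂ (X →L[ℂ] X) z - B)
      = algebraMap ℂ (YY X →L[ℂ] YY X) z - Bbar X B := by
  ext yv
  obtain ⟨f, rfl⟩ := Submodule.Quotient.mk_surjective (czero X) yv
  have hel : Bext X (algebraMap ℂ (X →L[ℂ] X) z - B) f = z • f - Bext X B f := by
    apply Subtype.ext
    funext n
    show (algebraMap ℂ (X →L[ℂ] X) z - B) (f n) = (z • f - Bext X B f) n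
    rw [lp_sub_apply, lp_smul_apply, Bext_apply]
    simp [Algebra.algebraMap_eq_smul_one]
  show Bbar X (algebraMap ℂ (X →L[ℂ] X) z - B) (Submodule.Quotient.mk f)
      = (algebraMap ℂ (YY X →L[ℂ] YY X) z - Bbar X B) (Submodule.Quotient.mk f)
  rw [Bbar_mk, hel, ContinuousLinearMap.sub_apply, Bbar_mk,
    Algebra.algebraMap_eq_smul_one, ContinuousLinearMap.smul_apply,
    ContinuousLinearMap.one_apply, Submodule.Quotient.mk_sub, Submodule.Quotient.mk_smul]

lemma mem_resolventSet_Bbar {z : ℂ} {B : X →L[ℂ] X} (hz : z ∈ resolventSet ℂ B) :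
    z ∈ resolventSet ℂ (Bbar X B) := by
  rw [spectrum.mem_resolventSet_iff] at hz
  exact gen_mem_res_isUnit (Bbar X B) (Bbar_algebraMap_sub X z B ▸ isUnit_Bbar X hz)

lemma Sbar_commute_Bbar (B : X →L[ℂ] X) : Commute (Sbar X) (Bbar X B) := by
  show Sbar X * Bbar X B = Bbar X B * Sbar X
  ext yv
  obtain ⟨f, rfl⟩ := Submodule.Quotient.mk_surjective (czero X) yv
  show Sbar X (Bbar X B (Submodule.Quotient.mk f))
      = Bbar X B (Sbar X (Submodule.Quotient.mk f))
  rw [Bbar_mk, Sbar_mk, Sbar_mk, Bbar_mk]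
  congr 1

/-- Key resolvent comparison: if `S̄ x̄ = B̄ x̄` then the two resolvents agree at `x̄` wherever
both are defined. -/
lemma resolvent_eq_of_eq {B : X →L[ℂ] X} {v : YY X} (hv : Sbar X v = Bbar X B v)
    {z : ℂ} (hS : z ∈ resolventSet ℂ (Sbar X)) (hB : z ∈ resolventSet ℂ (Bbar X B)) :
    (resolvent (Sbar X) z) v = (resolvent (Bbar X B) z) v :=
  gen_resolvent_eq (Sbar X) (Bbar X B) (Sbar_commute_Bbar X B) v hv hS hB

lemma gfun_analyticOnNhd (x : Linf X) :
    AnalyticOnNhd ℂ (gfun X x) {z : ℂ | ‖z‖ ≠ 1} :=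
  gen_analyticOnNhd (Sbar X) (Submodule.Quotient.mk x) {z : ℂ | ‖z‖ ≠ 1}
    (isOpen_ne.preimage continuous_norm) (fun _ hz => mem_resolventSet_Sbar X hz)

/-- If a bounded sequence `x` satisfies `x_{n+1} = B x_n + y_n` with `y_n → 0`,
then `S̄ x̄ = B̄ x̄` in `Y`, and `σ(x) ⊆ σ(B) ∩ ∂𝔻`. -/
theorem seqSpectrum_subset_of_difference_equation (B : X →L[ℂ] X) (x : Linf X) (y : ℕ → X)
    (hy : Tendsto y atTop (𝓝 (0 : X)))
    (hrec : ∀ n : ℕ, x (n + 1) = B (x n) + y n) :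
    Sbar X (Submodule.Quotient.mk x) = Bbar X B (Submodule.Quotient.mk x) ∧
    seqSpectrum X x ⊆ spectrum ℂ B ∩ {lam : ℂ | ‖lam‖ = 1} := by
  have hmain : Sbar X (Submodule.Quotient.mk x) = Bbar X B (Submodule.Quotient.mk x) := by
    rw [Sbar_mk, Bbar_mk, Submodule.Quotient.eq]
    show Tendsto (fun n => (shiftL X x - Bext X B x) n) atTop (𝓝 (0 : X))
    have heq : ∀ n : ℕ, (shiftL X x - Bext X B x) n = y n := by
      intro n
      rw [lp_sub_apply, shiftL_apply, Bext_apply, hrec n]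
      abel
    simpa only [heq] using hy
  refine ⟨hmain, ?_⟩
  intro z hz
  by_contra hcon
  apply hz
  by_cases h1 : ‖z‖ = 1
  · -- then z ∉ spectrum B
    have hzB : z ∈ resolventSet ℂ B := by
      by_contra hzB
      exact hcon ⟨hzB, h1⟩
    refine ⟨resolventSet ℂ B, fun w => (resolvent (Bbar X B) w) (Submodule.Quotient.mk x),
      spectrum.isOpen_resolventSet B, hzB, ?_, ?_⟩
    · exact gen_analyticOnNhd (Bbar X B) (Submodule.Quotient.mk x) (resolventSet ℂ B)
        (spectrum.isOpen_resolventSet B) (fun w hw => mem_resolventSet_Bbar X hw)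
    · intro w hw hw1
      exact (resolvent_eq_of_eq X hmain (mem_resolventSet_Sbar X hw1)
        (mem_resolventSet_Bbar X hw)).symm
  · refine ⟨{w : ℂ | ‖w‖ ≠ 1}, gfun X x, isOpen_ne.preimage continuous_norm, h1,
      gfun_analyticOnNhd X x, fun w _ _ => rfl⟩
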